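/- Let φ(x) = exp(−|x|²/2) on ℝ^n and for τ > 0 let P_τ denote the Ornstein–Uhlenbeck (Mehler) semigroup, P_τ f(x) = (2π(1−e^{−2τ}))^{−n/2} ∫_{ℝ^n} f(y) exp(−|y − e^{−τ}x|²/(2(1−e^{−2τ}))) dy. Let s, t ≥ 0 with s + t = 1 and let a, b, c be nonnegative bounded Borel functions on ℝ^n such that a(s·x + t·y)·φ(s·x + t·y) ≥ (b(x)·φ(x))^s · (c(y)·φ(y))^t for all x, y ∈ ℝ^n. Then for every τ > 0, P_τa(s·x + t·y)·φ(s·x + t·y) ≥ (P_τb(x)·φ(x))^s · (P_τc(y)·φ(y))^t for all x, y ∈ ℝ^n. -/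

import Mathlib

open MeasureTheory Pointwise ENNReal

noncomputable section

/-- A nonnegative function is log-concave if `f x ^ s * f y ^ t ≤ f (s • x + t • y)`
for all `x, y` and all `s, t ≥ 0` with `s + t = 1`. -/
def IsLogConcave {E : Type*} [AddCommGroup E] [Module ℝ E] (f : E → ℝ) : Prop :=
  ∀ x y : E, ∀ s t : ℝ, 0 ≤ s → 0 ≤ t → s + t = 1 →
    f x ^ s * f y ^ t ≤ f (s • x + t • y)

/-- The Prékopa–Leindler property of a measure, tested on nonnegative continuous
compactly supported functions. -/
def PrekopaLeindler {E : Type*} [AddCommGroup E] [Module ℝ E] [TopologicalSpace E]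
    [MeasurableSpace E] (ρ : Measure E) : Prop :=
  ∀ s t : ℝ, 0 ≤ s → 0 ≤ t → s + t = 1 →
    ∀ a b c : E → ℝ, Continuous a → Continuous b → Continuous c →
      HasCompactSupport a → HasCompactSupport b → HasCompactSupport c →
      (∀ x, 0 ≤ a x) → (∀ x, 0 ≤ b x) → (∀ x, 0 ≤ c x) →
      (∀ x y, b x ^ s * c y ^ t ≤ a (s • x + t • y)) →
      (∫ x, b x ∂ρ) ^ s * (∫ x, c x ∂ρ) ^ t ≤ ∫ x, a x ∂ρ


/-- The Ornstein–Uhlenbeck (Mehler) semigroup on `ℝ^n`. -/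
def ornsteinUhlenbeck {n : ℕ} (τ : ℝ) (f : EuclideanSpace ℝ (Fin n) → ℝ)
    (x : EuclideanSpace ℝ (Fin n)) : ℝ :=
  (2 * Real.pi * (1 - Real.exp (-2 * τ))) ^ (-(n : ℝ) / 2) *
    ∫ y, f y * Real.exp (-‖y - Real.exp (-τ) • x‖ ^ 2 / (2 * (1 - Real.exp (-2 * τ))))



section PLaux
open Set RealInnerProductSpace

lemma volume_superadd {A B S : Set ℝ} (hA : MeasurableSet A) (hB : MeasurableSet B)
    (hS : MeasurableSet S) (hAne : A.Nonempty) (hBne : B.Nonempty)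
    (hAS : ∀ a ∈ A, ∀ b ∈ B, a + b ∈ S) :
    volume A + volume B ≤ volume S := by
  obtain ⟨a0, ha0⟩ := hAne
  obtain ⟨b0, hb0⟩ := hBne
  have hsubA : ∀ b ∈ B, volume A ≤ volume S := by
    intro b hb
    have : (b +ᵥ A) ⊆ S := by
      rintro x ⟨k, hk, rfl⟩
      simpa [add_comm] using hAS k hk b hb
    calc volume A = volume (b +ᵥ A) := (measure_vadd _ _ _).symm
      _ ≤ volume S := measure_mono this
  have hsubB : ∀ a ∈ A, volume B ≤ volume S := by
    intro a ha
    have : (a +ᵥ B) ⊆ S := by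
      rintro x ⟨k, hk, rfl⟩
      exact hAS a ha k hk
    calc volume B = volume (a +ᵥ B) := (measure_vadd _ _ _).symm
      _ ≤ volume S := measure_mono this
  by_cases hStop : volume S = ∞
  · simp [hStop]
  by_cases hAtop : volume A = ∞
  · exact absurd (top_le_iff.mp (hAtop ▸ hsubA b0 hb0)) hStop
  by_cases hBtop : volume B = ∞
  · exact absurd (top_le_iff.mp (hBtop ▸ hsubB a0 ha0)) hStop
  refine ENNReal.le_of_forall_pos_le_add fun ε hε hlt => ?_
  obtain ⟨K, hKA, hKc, hKm⟩ := hA.exists_isCompact_lt_add hAtop (ε := ε / 2) (by simpa using hε.ne')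
  obtain ⟨L, hLB, hLc, hLm⟩ := hB.exists_isCompact_lt_add hBtop (ε := ε / 2) (by simpa using hε.ne')
  set K' : Set ℝ := K ∪ {a0} with hK'
  set L' : Set ℝ := L ∪ {b0} with hL'
  have hK'c : IsCompact K' := hKc.union isCompact_singleton
  have hL'c : IsCompact L' := hLc.union isCompact_singleton
  have hK'A : K' ⊆ A := union_subset hKA (by simpa using ha0)
  have hL'B : L' ⊆ B := union_subset hLB (by simpa using hb0)
  have hK'ne : K'.Nonempty := ⟨a0, by simp [hK']⟩
  have hL'ne : L'.Nonempty := ⟨b0, by simp [hL']⟩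
  set d : ℝ := sSup K' with hd
  set c : ℝ := sInf L' with hc
  have hdK : d ∈ K' := hK'c.sSup_mem hK'ne
  have hcL : c ∈ L' := hL'c.sInf_mem hL'ne
  set U : Set ℝ := c +ᵥ K' with hU
  set V : Set ℝ := d +ᵥ L' with hV
  have hUm : MeasurableSet U := hK'c.measurableSet.const_vadd c
  have hVm : MeasurableSet V := hL'c.measurableSet.const_vadd d
  have hUS : U ⊆ S := by
    rintro x ⟨k, hk, rfl⟩
    simpa [add_comm] using hAS k (hK'A hk) c (hL'B hcL)
  have hVS : V ⊆ S := by
    rintro x ⟨l, hl, rfl⟩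
    exact hAS d (hK'A hdK) l (hL'B hl)
  have hUV : U ∩ V ⊆ {d + c} := by
    rintro x ⟨⟨k, hk, rfl⟩, ⟨l, hl, hlx⟩⟩
    simp only [vadd_eq_add] at hlx
    have h1 := le_csSup hK'c.bddAbove hk
    have h2 := csInf_le hL'c.bddBelow hl
    simp only [mem_singleton_iff, vadd_eq_add]
    linarith
  have hUVz : volume (U ∩ V) = 0 :=
    le_antisymm (le_trans (measure_mono hUV) (by simp)) zero_le
  have hUnion : volume U + volume V ≤ volume S := by
    rw [← measure_union_add_inter U hVm, hUVz, add_zero]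
    exact measure_mono (union_subset hUS hVS)
  have hvu : volume U = volume K' := measure_vadd _ _ _
  have hvv : volume V = volume L' := measure_vadd _ _ _
  have hKK' : volume A < volume K' + ε / 2 :=
    lt_of_lt_of_le hKm (add_le_add_left (measure_mono subset_union_left) _)
  have hLL' : volume B < volume L' + ε / 2 :=
    lt_of_lt_of_le hLm (add_le_add_left (measure_mono subset_union_left) _)
  calc volume A + volume B ≤ (volume K' + ε / 2) + (volume L' + ε / 2) :=
        add_le_add hKK'.le hLL'.le
    _ = (volume U + volume V) + (ε / 2 + ε / 2) := by rw [hvu, hvv]; ring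
    _ ≤ volume S + ε := by
        rw [ENNReal.add_halves]
        exact add_le_add_left hUnion _

lemma one_dim_pl {s t : ℝ} (hs : 0 < s) (ht : 0 < t) (hst : s + t = 1)
    {f g h : ℝ → ℝ} (hf : Measurable f) (hg : Measurable g) (hh : Measurable h)
    (hf0 : ∀ x, 0 ≤ f x) (hg0 : ∀ x, 0 ≤ g x) (hh0 : ∀ x, 0 ≤ h x)
    (hfi : Integrable f) (hgi : Integrable g) (hhi : Integrable h)
    {Cf Cg : ℝ} (hfb : ∀ x, f x ≤ Cf) (hgb : ∀ x, g x ≤ Cg)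
    (hyp : ∀ x y, f x ^ s * g y ^ t ≤ h (s * x + t * y)) :
    (∫ x, f x) ^ s * (∫ x, g x) ^ t ≤ ∫ x, h x := by
  have hIh : 0 ≤ ∫ x, h x := integral_nonneg hh0
  by_cases hIf0 : (∫ x, f x) = 0
  · rw [hIf0, Real.zero_rpow hs.ne', zero_mul]; exact hIh
  by_cases hIg0 : (∫ x, g x) = 0
  · rw [hIg0, Real.zero_rpow ht.ne', mul_zero]; exact hIh
  have hIf : 0 < ∫ x, f x := lt_of_le_of_ne (integral_nonneg hf0) (Ne.symm hIf0)
  have hIg : 0 < ∫ x, g x := lt_of_le_of_ne (integral_nonneg hg0) (Ne.symm hIg0)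
  have hrf : BddAbove (range f) := ⟨Cf, by rintro _ ⟨x, rfl⟩; exact hfb x⟩
  have hrg : BddAbove (range g) := ⟨Cg, by rintro _ ⟨x, rfl⟩; exact hgb x⟩
  set F : ℝ := sSup (range f) with hF
  set G : ℝ := sSup (range g) with hG
  have hfF : ∀ x, f x ≤ F := fun x => le_csSup hrf (mem_range_self x)
  have hgG : ∀ x, g x ≤ G := fun x => le_csSup hrg (mem_range_self x)
  have hFpos : 0 < F := by
    by_contra hc
    push_neg at hc
    have : ∀ x, f x = 0 := fun x => le_antisymm (le_trans (hfF x) hc) (hf0 x)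
    exact hIf0 (by simp [this])
  have hGpos : 0 < G := by
    by_contra hc
    push_neg at hc
    have : ∀ x, g x = 0 := fun x => le_antisymm (le_trans (hgG x) hc) (hg0 x)
    exact hIg0 (by simp [this])
  set K : ℝ := F ^ s * G ^ t with hK
  have hKpos : 0 < K := mul_pos (Real.rpow_pos_of_pos hFpos s) (Real.rpow_pos_of_pos hGpos t)
  set f' : ℝ → ℝ := fun x => f x / F with hf'
  set g' : ℝ → ℝ := fun x => g x / G with hg'
  set h' : ℝ → ℝ := fun x => h x / K with hh'
  have hf'm : Measurable f' := hf.div_const F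
  have hg'm : Measurable g' := hg.div_const G
  have hh'm : Measurable h' := hh.div_const K
  have hf'0 : ∀ x, 0 ≤ f' x := fun x => div_nonneg (hf0 x) hFpos.le
  have hg'0 : ∀ x, 0 ≤ g' x := fun x => div_nonneg (hg0 x) hGpos.le
  have hh'0 : ∀ x, 0 ≤ h' x := fun x => div_nonneg (hh0 x) hKpos.le
  have hf'1 : ∀ x, f' x ≤ 1 := fun x => (div_le_one hFpos).mpr (hfF x)
  have hg'1 : ∀ x, g' x ≤ 1 := fun x => (div_le_one hGpos).mpr (hgG x)
  -- key superlevel set inequality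
  have key : ∀ l : ℝ, l ∈ Ioo (0:ℝ) 1 →
      ENNReal.ofReal s * volume {x | l < f' x} + ENNReal.ofReal t * volume {x | l < g' x}
        ≤ volume {x | l < h' x} := by
    intro l hl
    obtain ⟨hl0, hl1⟩ := hl
    have hE1m : MeasurableSet {x | l < f' x} := measurableSet_lt measurable_const hf'm
    have hE2m : MeasurableSet {x | l < g' x} := measurableSet_lt measurable_const hg'm
    have hE3m : MeasurableSet {x | l < h' x} := measurableSet_lt measurable_const hh'm
    have hE1ne : {x | l < f' x}.Nonempty := by
      obtain ⟨_, ⟨x, rfl⟩, hx⟩ := exists_lt_of_lt_csSup (range_nonempty f)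
        (show l * F < F by nlinarith)
      exact ⟨x, by simp only [hf', mem_setOf_eq]; rw [lt_div_iff₀ hFpos]; linarith⟩
    have hE2ne : {x | l < g' x}.Nonempty := by
      obtain ⟨_, ⟨x, rfl⟩, hx⟩ := exists_lt_of_lt_csSup (range_nonempty g)
        (show l * G < G by nlinarith)
      exact ⟨x, by simp only [hg', mem_setOf_eq]; rw [lt_div_iff₀ hGpos]; linarith⟩
    have hsm : MeasurableSet (s • {x | l < f' x}) := hE1m.const_smul₀ s
    have htm : MeasurableSet (t • {x | l < g' x}) := hE2m.const_smul₀ t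
    have hsne : (s • {x | l < f' x}).Nonempty := hE1ne.smul_set
    have htne : (t • {x | l < g' x}).Nonempty := hE2ne.smul_set
    have hsum : ∀ a ∈ s • {x | l < f' x}, ∀ b ∈ t • {x | l < g' x}, a + b ∈ {x | l < h' x} := by
      rintro _ ⟨x, hx, rfl⟩ _ ⟨y, hy, rfl⟩
      simp only [mem_setOf_eq] at hx hy ⊢
      simp only [smul_eq_mul]
      have hfx : l * F < f x := by
        rw [hf', lt_div_iff₀ hFpos] at hx; linarith
      have hgy : l * G < g y := by
        rw [hg', lt_div_iff₀ hGpos] at hy; linarith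
      have h1 : (l * F) ^ s < f x ^ s :=
        Real.rpow_lt_rpow (by positivity) hfx hs
      have h2 : (l * G) ^ t < g y ^ t :=
        Real.rpow_lt_rpow (by positivity) hgy ht
      have h3 : (l * F) ^ s * (l * G) ^ t < f x ^ s * g y ^ t := by
        have p1 : 0 < (l * F) ^ s := Real.rpow_pos_of_pos (by positivity) s
        have p2 : 0 < (l * G) ^ t := Real.rpow_pos_of_pos (by positivity) t
        calc (l * F) ^ s * (l * G) ^ t < f x ^ s * (l * G) ^ t := by
              apply mul_lt_mul_of_pos_right h1 p2
          _ ≤ f x ^ s * g y ^ t := by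
              apply mul_le_mul_of_nonneg_left h2.le (Real.rpow_nonneg (hf0 x) s)
      have h4 : (l * F) ^ s * (l * G) ^ t = l * K := by
        rw [Real.mul_rpow hl0.le hFpos.le, Real.mul_rpow hl0.le hGpos.le]
        rw [show l ^ s * F ^ s * (l ^ t * G ^ t) = (l ^ s * l ^ t) * (F ^ s * G ^ t) by ring]
        rw [← Real.rpow_add hl0, hst, Real.rpow_one, hK]
      have h5 := lt_of_lt_of_le (h4 ▸ h3) (hyp x y)
      rw [hh', lt_div_iff₀ hKpos]
      linarith
    have hsuper := volume_superadd hsm htm hE3m hsne htne hsum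
    have hv1 : volume (s • {x | l < f' x}) = ENNReal.ofReal s * volume {x | l < f' x} := by
      rw [Measure.addHaar_smul_of_nonneg volume hs.le]
      simp
    have hv2 : volume (t • {x | l < g' x}) = ENNReal.ofReal t * volume {x | l < g' x} := by
      rw [Measure.addHaar_smul_of_nonneg volume ht.le]
      simp
    rw [hv1, hv2] at hsuper
    exact hsuper
  -- layer cake
  have hlc : ∀ (p : ℝ → ℝ), Measurable p → (∀ x, 0 ≤ p x) →
      ∫⁻ x, ENNReal.ofReal (p x) = ∫⁻ l in Ioi (0:ℝ), volume {x | l < p x} := fun p hp hp0 =>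
    lintegral_eq_lintegral_meas_lt volume (ae_of_all _ hp0) hp.aemeasurable
  have htrunc : ∀ (p : ℝ → ℝ), (∀ x, p x ≤ 1) →
      ∫⁻ l in Ioi (0:ℝ), volume {x | l < p x} = ∫⁻ l in Ioo (0:ℝ) 1, volume {x | l < p x} := by
    intro p hp1
    have hsplit : Ioi (0:ℝ) = Ioo 0 1 ∪ Ici 1 := by
      ext z
      simp only [mem_Ioi, mem_union, mem_Ioo, mem_Ici]
      constructor
      · intro hz
        by_cases h1 : z < 1
        · exact Or.inl ⟨hz, h1⟩
        · exact Or.inr (le_of_not_gt h1)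
      · rintro (⟨hz, _⟩ | hz) <;> linarith
    have hdisj : Disjoint (Ioo (0:ℝ) 1) (Ici 1) :=
      Set.disjoint_left.mpr fun z hz hz' => absurd hz.2 (not_lt.mpr hz')
    rw [hsplit, lintegral_union measurableSet_Ici hdisj]
    have hzero : ∫⁻ l in Ici (1:ℝ), volume {x | l < p x} = 0 := by
      have hcongr : ∀ l ∈ Ici (1:ℝ), volume {x | l < p x} = (0:ℝ≥0∞) := by
        intro l hl
        have : {x | l < p x} = ∅ := by
          ext x
          simp only [mem_setOf_eq, mem_empty_iff_false, iff_false, not_lt]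
          exact le_trans (hp1 x) hl
        simp [this]
      rw [setLIntegral_congr_fun measurableSet_Ici hcongr]
      simp
    rw [hzero, add_zero]
  have hmf : Measurable fun l : ℝ => volume {x | l < f' x} :=
    Antitone.measurable fun a b hab => measure_mono fun x hx => lt_of_le_of_lt hab hx
  have hmg : Measurable fun l : ℝ => volume {x | l < g' x} :=
    Antitone.measurable fun a b hab => measure_mono fun x hx => lt_of_le_of_lt hab hx
  have hIneq : ENNReal.ofReal s * (∫⁻ x, ENNReal.ofReal (f' x)) +
      ENNReal.ofReal t * (∫⁻ x, ENNReal.ofReal (g' x)) ≤ ∫⁻ x, ENNReal.ofReal (h' x) := by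
    rw [hlc f' hf'm hf'0, hlc g' hg'm hg'0, hlc h' hh'm hh'0,
        htrunc f' hf'1, htrunc g' hg'1]
    refine le_trans ?_ (lintegral_mono_set (Ioo_subset_Ioi_self : Ioo (0:ℝ) 1 ⊆ Ioi 0))
    rw [← lintegral_const_mul _ hmf, ← lintegral_const_mul _ hmg,
        ← lintegral_add_left (f := fun a => ENNReal.ofReal s * volume {x | a < f' x}) (measurable_const.mul hmf)]
    exact setLIntegral_mono (Antitone.measurable fun a b hab =>
      measure_mono fun x hx => lt_of_le_of_lt hab hx) key
  have hfi' : Integrable f' := hfi.div_const F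
  have hgi' : Integrable g' := hgi.div_const G
  have hhi' : Integrable h' := hhi.div_const K
  have e1 : ∫⁻ x, ENNReal.ofReal (f' x) = ENNReal.ofReal (∫ x, f' x) :=
    (ofReal_integral_eq_lintegral_ofReal hfi' (ae_of_all _ hf'0)).symm
  have e2 : ∫⁻ x, ENNReal.ofReal (g' x) = ENNReal.ofReal (∫ x, g' x) :=
    (ofReal_integral_eq_lintegral_ofReal hgi' (ae_of_all _ hg'0)).symm
  have e3 : ∫⁻ x, ENNReal.ofReal (h' x) = ENNReal.ofReal (∫ x, h' x) :=
    (ofReal_integral_eq_lintegral_ofReal hhi' (ae_of_all _ hh'0)).symm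
  rw [e1, e2, e3, ← ENNReal.ofReal_mul hs.le, ← ENNReal.ofReal_mul ht.le,
      ← ENNReal.ofReal_add (mul_nonneg hs.le (integral_nonneg hf'0)) (mul_nonneg ht.le (integral_nonneg hg'0))] at hIneq
  have hreal : s * (∫ x, f' x) + t * (∫ x, g' x) ≤ ∫ x, h' x :=
    (ENNReal.ofReal_le_ofReal_iff (integral_nonneg hh'0)).mp hIneq
  have hamgm : (∫ x, f' x) ^ s * (∫ x, g' x) ^ t ≤ s * (∫ x, f' x) + t * (∫ x, g' x) :=
    Real.geom_mean_le_arith_mean2_weighted hs.le ht.le (integral_nonneg hf'0)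
      (integral_nonneg hg'0) hst
  have hIf' : (∫ x, f' x) = (∫ x, f x) / F := by
    simp only [hf']
    exact integral_div F f
  have hIg' : (∫ x, g' x) = (∫ x, g x) / G := by
    simp only [hg']
    exact integral_div G g
  have hIh'' : (∫ x, h' x) = (∫ x, h x) / K := by
    simp only [hh']
    exact integral_div K h
  have hfinal : (∫ x, f x) ^ s * (∫ x, g x) ^ t = K * ((∫ x, f' x) ^ s * (∫ x, g' x) ^ t) := by
    rw [hIf', hIg', Real.div_rpow (integral_nonneg hf0) hFpos.le,
        Real.div_rpow (integral_nonneg hg0) hGpos.le, hK]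
    have hFs : (F:ℝ) ^ s ≠ 0 := (Real.rpow_pos_of_pos hFpos s).ne'
    have hGt : (G:ℝ) ^ t ≠ 0 := (Real.rpow_pos_of_pos hGpos t).ne'
    field_simp
    try ring
  rw [hfinal]
  calc K * ((∫ x, f' x) ^ s * (∫ x, g' x) ^ t)
      ≤ K * (∫ x, h' x) :=
        mul_le_mul_of_nonneg_left (hamgm.trans hreal) hKpos.le
    _ = ∫ x, h x := by rw [hIh'']; field_simp

lemma integrable_gauss1 {c : ℝ} (hc : 0 < c) (m : ℝ) :
    Integrable (fun x : ℝ => Real.exp (-(x - m) ^ 2 / c)) := by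
  have : (fun x : ℝ => Real.exp (-(x - m) ^ 2 / c))
      = (fun x : ℝ => Real.exp (-(1/c) * x ^ 2)) ∘ (fun x => x - m) := by
    funext x; simp only [Function.comp_apply]; ring_nf
  rw [this]
  exact (integrable_exp_neg_mul_sq (by positivity)).comp_sub_right m

lemma integrable_gauss_pi {c : ℝ} (hc : 0 < c) (n : ℕ) (m : Fin n → ℝ) :
    Integrable (fun x : Fin n → ℝ => ∏ i, Real.exp (-(x i - m i) ^ 2 / c)) :=
  Integrable.fintype_prod (f := fun i x => Real.exp (-(x - m i) ^ 2 / c))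
    (fun i => integrable_gauss1 hc (m i))

lemma gauss_le_one {c : ℝ} (hc : 0 < c) (u : ℝ) : Real.exp (-u ^ 2 / c) ≤ 1 := by
  rw [neg_div]
  exact Real.exp_le_one_iff.mpr (neg_nonpos.mpr (by positivity))

lemma insertNth_comb {n : ℕ} (s t : ℝ) (x0 y0 : ℝ) (z w : Fin n → ℝ) :
    s • Fin.insertNth (α := fun _ => ℝ) 0 x0 z + t • Fin.insertNth (α := fun _ => ℝ) 0 y0 w
      = Fin.insertNth (α := fun _ => ℝ) 0 (s * x0 + t * y0) (s • z + t • w) := by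
  ext i
  refine Fin.cases ?_ (fun j => ?_) i
  · simp
  · have h0 : Fin.succ j = (0 : Fin (n+1)).succAbove j := by simp [Fin.succAbove_zero]
    simp only [Pi.add_apply, Pi.smul_apply, h0, Fin.insertNth_apply_succAbove, smul_eq_mul]

lemma prod_gauss_succ {n : ℕ} {c : ℝ} (m : Fin (n+1) → ℝ) (x0 : ℝ) (z : Fin n → ℝ) :
    (∏ i, Real.exp (-(Fin.insertNth (α := fun _ => ℝ) 0 x0 z i - m i) ^ 2 / c))
      = Real.exp (-(x0 - m 0) ^ 2 / c) *
        ∏ j, Real.exp (-(z j - m ((0 : Fin (n+1)).succAbove j)) ^ 2 / c) := by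
  rw [Fin.prod_univ_succAbove _ 0]
  simp [Fin.insertNth_apply_same, Fin.insertNth_apply_succAbove]

lemma pl_pi {s t : ℝ} (hs : 0 < s) (ht : 0 < t) (hst : s + t = 1) {c : ℝ} (hc : 0 < c) :
    ∀ (n : ℕ) (f g h : (Fin n → ℝ) → ℝ), Measurable f → Measurable g → Measurable h →
    (∀ x, 0 ≤ f x) → (∀ x, 0 ≤ g x) → (∀ x, 0 ≤ h x) →
    (∃ (M : ℝ) (m : Fin n → ℝ), ∀ x, f x ≤ M * ∏ i, Real.exp (-(x i - m i) ^ 2 / c)) →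
    (∃ (M : ℝ) (m : Fin n → ℝ), ∀ x, g x ≤ M * ∏ i, Real.exp (-(x i - m i) ^ 2 / c)) →
    (∃ (M : ℝ) (m : Fin n → ℝ), ∀ x, h x ≤ M * ∏ i, Real.exp (-(x i - m i) ^ 2 / c)) →
    (∀ x y, f x ^ s * g y ^ t ≤ h (s • x + t • y)) →
    (∫ x, f x) ^ s * (∫ x, g x) ^ t ≤ ∫ x, h x := by
  intro n
  induction n with
  | zero =>
    intro f g h _ _ _ _ _ _ _ _ _ hyp
    have huniv : (volume : Measure (Fin 0 → ℝ)) Set.univ = 1 := by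
      simp [volume_pi, Measure.pi_univ]
    have h1 : ∀ (p : (Fin 0 → ℝ) → ℝ), (∫ x, p x) = p default := by
      intro p
      rw [integral_unique, measureReal_def, huniv]
      simpa using congrArg p (Subsingleton.elim _ _)
    rw [h1, h1, h1]
    have := hyp default default
    rwa [Subsingleton.elim (s • (default : Fin 0 → ℝ) + t • default) default] at this
  | succ n IH =>
    intro f g h hfm hgm hhm hf0 hg0 hh0 hfD hgD hhD hyp
    obtain ⟨Mf, mf, hMf⟩ := hfD
    obtain ⟨Mg, mg, hMg⟩ := hgD
    obtain ⟨Mh, mh, hMh⟩ := hhD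
    set e := MeasurableEquiv.piFinSuccAbove (fun _ : Fin (n+1) => ℝ) 0 with he
    have hesymm : ∀ p : ℝ × (Fin n → ℝ), e.symm p = Fin.insertNth (α := fun _ => ℝ) 0 p.1 p.2 := by
      intro p; rfl
    have vp : MeasurePreserving e volume volume :=
      volume_preserving_piFinSuccAbove (fun _ : Fin (n+1) => ℝ) 0
    -- positivity of prod gauss and nonnegativity of constants
    have hprodpos : ∀ (k : ℕ) (m' : Fin k → ℝ) (x : Fin k → ℝ),
        0 < ∏ i, Real.exp (-(x i - m' i) ^ 2 / c) :=
      fun k m' x => Finset.prod_pos fun i _ => Real.exp_pos _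
    have hMf0 : 0 ≤ Mf := by
      have := (hf0 default).trans (hMf default)
      nlinarith [hprodpos (n+1) mf default]
    have hMg0 : 0 ≤ Mg := by
      have := (hg0 default).trans (hMg default)
      nlinarith [hprodpos (n+1) mg default]
    have hMh0 : 0 ≤ Mh := by
      have := (hh0 default).trans (hMh default)
      nlinarith [hprodpos (n+1) mh default]
    -- integrability on the pi space
    have hint : ∀ (p : (Fin (n+1) → ℝ) → ℝ), Measurable p → (∀ x, 0 ≤ p x) →
        ∀ (M : ℝ) (m : Fin (n+1) → ℝ),
        (∀ x, p x ≤ M * ∏ i, Real.exp (-(x i - m i) ^ 2 / c)) → Integrable p := by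
      intro p hpm hp0 M m hpM
      refine Integrable.mono' ((integrable_gauss_pi hc (n+1) m).const_mul M)
        hpm.aestronglyMeasurable (ae_of_all _ fun x => ?_)
      rw [Real.norm_of_nonneg (hp0 x)]
      exact hpM x
    have hfi := hint f hfm hf0 Mf mf hMf
    have hgi := hint g hgm hg0 Mg mg hMg
    have hhi := hint h hhm hh0 Mh mh hMh
    -- transfer to the product space
    have hprod_int : ∀ (p : (Fin (n+1) → ℝ) → ℝ), Integrable p →
        Integrable (fun q : ℝ × (Fin n → ℝ) => p (Fin.insertNth (α := fun _ => ℝ) 0 q.1 q.2)) := by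
      intro p hp
      have := ((vp.symm e).integrable_comp_emb e.symm.measurableEmbedding (g := p)).mpr hp
      refine this.congr (ae_of_all _ fun q => ?_)
      rw [Function.comp_apply, hesymm]
    -- slices
    have hslice_m : ∀ (p : (Fin (n+1) → ℝ) → ℝ), Measurable p → ∀ x0 : ℝ,
        Measurable (fun z : Fin n → ℝ => p (Fin.insertNth (α := fun _ => ℝ) 0 x0 z)) := by
      intro p hp x0
      have : Measurable (fun z : Fin n → ℝ => e.symm (x0, z)) :=
        e.symm.measurable.comp (measurable_const.prodMk measurable_id)
      simpa [hesymm, Function.comp_def] using hp.comp this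
    -- marginal package
    have pack : ∀ (p : (Fin (n+1) → ℝ) → ℝ) (hpm : Measurable p) (hp0 : ∀ x, 0 ≤ p x)
        (M : ℝ) (hM0 : 0 ≤ M) (m : Fin (n+1) → ℝ)
        (hpM : ∀ x, p x ≤ M * ∏ i, Real.exp (-(x i - m i) ^ 2 / c)),
        Measurable (fun x0 : ℝ => ∫ z, p (Fin.insertNth (α := fun _ => ℝ) 0 x0 z))
        ∧ (∀ x0, 0 ≤ ∫ z, p (Fin.insertNth (α := fun _ => ℝ) 0 x0 z))
        ∧ Integrable (fun x0 : ℝ => ∫ z, p (Fin.insertNth (α := fun _ => ℝ) 0 x0 z))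
        ∧ (∃ C, ∀ x0, (∫ z, p (Fin.insertNth (α := fun _ => ℝ) 0 x0 z)) ≤ C)
        ∧ (∫ x0, ∫ z, p (Fin.insertNth (α := fun _ => ℝ) 0 x0 z)) = ∫ x, p x := by
      intro p hpm hp0 M hM0 m hpM
      have hpi := hint p hpm hp0 M m hpM
      have hq : Integrable
          (fun q : ℝ × (Fin n → ℝ) => p (Fin.insertNth (α := fun _ => ℝ) 0 q.1 q.2)) :=
        hprod_int p hpi
      have hq' : Integrable
          (fun q : ℝ × (Fin n → ℝ) => p (Fin.insertNth (α := fun _ => ℝ) 0 q.1 q.2))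
          ((volume : Measure ℝ).prod (volume : Measure (Fin n → ℝ))) := by
        rwa [Measure.volume_eq_prod] at hq
      have hqm : Measurable
          (fun q : ℝ × (Fin n → ℝ) => p (Fin.insertNth (α := fun _ => ℝ) 0 q.1 q.2)) := by
        have hm2 : Measurable (fun q : ℝ × (Fin n → ℝ) => e.symm q) := e.symm.measurable
        simpa [hesymm, Function.comp_def] using hpm.comp hm2
      have hsliceInt : ∀ x0 : ℝ,
          Integrable (fun z : Fin n → ℝ => p (Fin.insertNth (α := fun _ => ℝ) 0 x0 z)) := by
        intro x0
        refine Integrable.mono'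
          ((integrable_gauss_pi hc n (fun j => m ((0 : Fin (n+1)).succAbove j))).const_mul
            (M * Real.exp (-(x0 - m 0) ^ 2 / c)))
          ((hslice_m p hpm x0).aestronglyMeasurable) (ae_of_all _ fun z => ?_)
        rw [Real.norm_of_nonneg (hp0 _)]
        have h1 := hpM (Fin.insertNth (α := fun _ => ℝ) 0 x0 z)
        rw [prod_gauss_succ, ← mul_assoc] at h1
        exact h1
      refine ⟨(hqm.stronglyMeasurable.integral_prod_right').measurable,
        fun x0 => integral_nonneg fun z => hp0 _, hq'.integral_prod_left, ?_, ?_⟩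
      · refine ⟨M * ∫ z : Fin n → ℝ,
          ∏ j, Real.exp (-(z j - m ((0 : Fin (n+1)).succAbove j)) ^ 2 / c), fun x0 => ?_⟩
        have hJ0 : 0 ≤ ∫ z : Fin n → ℝ,
            ∏ j, Real.exp (-(z j - m ((0 : Fin (n+1)).succAbove j)) ^ 2 / c) :=
          integral_nonneg fun z => Finset.prod_nonneg fun j _ => (Real.exp_pos _).le
        calc (∫ z, p (Fin.insertNth (α := fun _ => ℝ) 0 x0 z))
            ≤ ∫ z : Fin n → ℝ, M * Real.exp (-(x0 - m 0) ^ 2 / c) *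
                ∏ j, Real.exp (-(z j - m ((0 : Fin (n+1)).succAbove j)) ^ 2 / c) := by
              refine integral_mono (hsliceInt x0)
                ((integrable_gauss_pi hc n _).const_mul _) fun z => ?_
              have h1 := hpM (Fin.insertNth (α := fun _ => ℝ) 0 x0 z)
              rw [prod_gauss_succ, ← mul_assoc] at h1
              exact h1
          _ = M * Real.exp (-(x0 - m 0) ^ 2 / c) * ∫ z : Fin n → ℝ,
                ∏ j, Real.exp (-(z j - m ((0 : Fin (n+1)).succAbove j)) ^ 2 / c) :=
              integral_const_mul _ _
          _ ≤ M * (1 : ℝ) * ∫ z : Fin n → ℝ,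
                ∏ j, Real.exp (-(z j - m ((0 : Fin (n+1)).succAbove j)) ^ 2 / c) := by
              have h5 := gauss_le_one hc (x0 - m 0)
              have hx : 0 ≤ Real.exp (-(x0 - m 0) ^ 2 / c) := (Real.exp_pos _).le
              nlinarith [mul_nonneg hM0 hJ0]
          _ = M * ∫ z : Fin n → ℝ,
                ∏ j, Real.exp (-(z j - m ((0 : Fin (n+1)).succAbove j)) ^ 2 / c) := by ring
      · have h1 : (∫ q, p (Fin.insertNth (α := fun _ => ℝ) 0 q.1 q.2)
            ∂(volume : Measure (ℝ × (Fin n → ℝ)))) = ∫ x, p x := by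
          have h2 := (vp.symm e).integral_comp e.symm.measurableEmbedding p
          calc (∫ q, p (Fin.insertNth (α := fun _ => ℝ) 0 q.1 q.2)
                ∂(volume : Measure (ℝ × (Fin n → ℝ)))) = ∫ q, p (e.symm q) := by
                refine integral_congr_ae (ae_of_all _ fun q => ?_)
                exact congrArg p (hesymm q).symm
            _ = ∫ x, p x := h2
        rw [← h1, Measure.volume_eq_prod]
        exact integral_integral hq'
    obtain ⟨hFm, hF0, hFi, ⟨Cf, hFb⟩, hFI⟩ := pack f hfm hf0 Mf hMf0 mf hMf
    obtain ⟨hGm, hG0, hGi, ⟨Cg, hGb⟩, hGI⟩ := pack g hgm hg0 Mg hMg0 mg hMg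
    obtain ⟨hHm, hH0, hHi, ⟨Ch, hHb⟩, hHI⟩ := pack h hhm hh0 Mh hMh0 mh hMh
    have hypF : ∀ x0 y0 : ℝ,
        (∫ z, f (Fin.insertNth (α := fun _ => ℝ) 0 x0 z)) ^ s *
          (∫ z, g (Fin.insertNth (α := fun _ => ℝ) 0 y0 z)) ^ t ≤
        ∫ z, h (Fin.insertNth (α := fun _ => ℝ) 0 (s * x0 + t * y0) z) := by
      intro x0 y0
      refine IH (fun z => f (Fin.insertNth (α := fun _ => ℝ) 0 x0 z))
        (fun z => g (Fin.insertNth (α := fun _ => ℝ) 0 y0 z))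
        (fun z => h (Fin.insertNth (α := fun _ => ℝ) 0 (s * x0 + t * y0) z))
        (hslice_m f hfm x0) (hslice_m g hgm y0) (hslice_m h hhm _)
        (fun z => hf0 _) (fun z => hg0 _) (fun z => hh0 _)
        ⟨Mf * Real.exp (-(x0 - mf 0) ^ 2 / c), fun j => mf ((0 : Fin (n+1)).succAbove j),
          fun z => by
            have h1 := hMf (Fin.insertNth (α := fun _ => ℝ) 0 x0 z)
            rw [prod_gauss_succ, ← mul_assoc] at h1
            exact h1⟩
        ⟨Mg * Real.exp (-(y0 - mg 0) ^ 2 / c), fun j => mg ((0 : Fin (n+1)).succAbove j),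
          fun z => by
            have h1 := hMg (Fin.insertNth (α := fun _ => ℝ) 0 y0 z)
            rw [prod_gauss_succ, ← mul_assoc] at h1
            exact h1⟩
        ⟨Mh * Real.exp (-(s * x0 + t * y0 - mh 0) ^ 2 / c),
          fun j => mh ((0 : Fin (n+1)).succAbove j), fun z => by
            have h1 := hMh (Fin.insertNth (α := fun _ => ℝ) 0 (s * x0 + t * y0) z)
            rw [prod_gauss_succ, ← mul_assoc] at h1
            exact h1⟩
        (fun z w => by
          have h1 := hyp (Fin.insertNth (α := fun _ => ℝ) 0 x0 z)
            (Fin.insertNth (α := fun _ => ℝ) 0 y0 w)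
          rwa [insertNth_comb] at h1)
    rw [← hFI, ← hGI, ← hHI]
    exact one_dim_pl hs ht hst hFm hGm hHm hF0 hG0 hH0 hFi hGi hHi hFb hGb hypF

variable {E : Type*} [NormedAddCommGroup E] [InnerProductSpace ℝ E]

lemma PQ (s t : ℝ) (hst : s + t = 1) (p q : E) :
    s * ‖p‖ ^ 2 + t * ‖q‖ ^ 2 - ‖s • p + t • q‖ ^ 2 = s * t * ‖p - q‖ ^ 2 := by
  have ht' : t = 1 - s := by linarith
  subst ht'
  have h1 : ‖s • p + (1 - s) • q‖ ^ 2 = s ^ 2 * ‖p‖ ^ 2 + 2 * (s * (1 - s)) * ⟪p, q⟫ +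
      (1 - s) ^ 2 * ‖q‖ ^ 2 := by
    rw [norm_add_sq_real]
    simp only [norm_smul, real_inner_smul_left, real_inner_smul_right, mul_pow, Real.norm_eq_abs, sq_abs]
    ring
  have h2 : ‖p - q‖ ^ 2 = ‖p‖ ^ 2 - 2 * ⟪p, q⟫ + ‖q‖ ^ 2 := norm_sub_sq_real p q
  linear_combination (-1 : ℝ) * h1 - (s * (1 - s)) * h2

lemma Tlem (r : ℝ) (d e : E) :
    ‖d - r • e‖ ^ 2 + (1 - r ^ 2) * ‖e‖ ^ 2 - (1 - r ^ 2) * ‖d‖ ^ 2 = ‖r • d - e‖ ^ 2 := by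
  have h1 : ‖d - r • e‖ ^ 2 = ‖d‖ ^ 2 - 2 * (r * ⟪d, e⟫) + r ^ 2 * ‖e‖ ^ 2 := by
    rw [norm_sub_sq_real]
    simp only [norm_smul, real_inner_smul_right, mul_pow, Real.norm_eq_abs, sq_abs]
  have h2 : ‖r • d - e‖ ^ 2 = r ^ 2 * ‖d‖ ^ 2 - 2 * (r * ⟪d, e⟫) + ‖e‖ ^ 2 := by
    rw [norm_sub_sq_real]
    simp only [norm_smul, real_inner_smul_left, mul_pow, Real.norm_eq_abs, sq_abs]
  linear_combination h1 - h2

lemma exp_ineq (s t r : ℝ) (hs : 0 ≤ s) (ht : 0 ≤ t) (hst : s + t = 1)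
    (hr : 0 < 1 - r ^ 2) (x y u v : E) :
    s * (‖u‖ ^ 2 / 2 - ‖u - r • x‖ ^ 2 / (2 * (1 - r ^ 2)) - ‖x‖ ^ 2 / 2)
      + t * (‖v‖ ^ 2 / 2 - ‖v - r • y‖ ^ 2 / (2 * (1 - r ^ 2)) - ‖y‖ ^ 2 / 2)
    ≤ ‖s • u + t • v‖ ^ 2 / 2
      - ‖(s • u + t • v) - r • (s • x + t • y)‖ ^ 2 / (2 * (1 - r ^ 2))
      - ‖s • x + t • y‖ ^ 2 / 2 := by
  have E1 := PQ s t hst u v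
  have E2 := PQ s t hst x y
  have E3 := PQ s t hst (u - r • x) (v - r • y)
  have hzw : (s • u + t • v) - r • (s • x + t • y) = s • (u - r • x) + t • (v - r • y) := by
    module
  have hde : (u - r • x) - (v - r • y) = (u - v) - r • (x - y) := by module
  rw [hzw]
  rw [hde] at E3
  have E4 := Tlem r (u - v) (x - y)
  have hc0 : (1 - r ^ 2) ≠ 0 := hr.ne'
  have step1 : (‖s • u + t • v‖ ^ 2 / 2
        - ‖s • (u - r • x) + t • (v - r • y)‖ ^ 2 / (2 * (1 - r ^ 2))
        - ‖s • x + t • y‖ ^ 2 / 2)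
      - (s * (‖u‖ ^ 2 / 2 - ‖u - r • x‖ ^ 2 / (2 * (1 - r ^ 2)) - ‖x‖ ^ 2 / 2)
        + t * (‖v‖ ^ 2 / 2 - ‖v - r • y‖ ^ 2 / (2 * (1 - r ^ 2)) - ‖y‖ ^ 2 / 2))
      = s * t * ‖(u - v) - r • (x - y)‖ ^ 2 / (2 * (1 - r ^ 2))
        + s * t * ‖x - y‖ ^ 2 / 2 - s * t * ‖u - v‖ ^ 2 / 2 := by
    linear_combination (1 / 2) * E2 - (1 / 2) * E1 + (1 / (2 * (1 - r ^ 2))) * E3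
  have hnum : s * t * ‖(u - v) - r • (x - y)‖ ^ 2 * 2
        + (2 * (1 - r ^ 2)) * (s * t * ‖x - y‖ ^ 2)
        - (2 * (1 - r ^ 2)) * (s * t * ‖u - v‖ ^ 2)
      = 2 * (s * t * ‖r • (u - v) - (x - y)‖ ^ 2) := by
    linear_combination (2 * (s * t)) * E4
  have step2 : s * t * ‖(u - v) - r • (x - y)‖ ^ 2 / (2 * (1 - r ^ 2))
        + s * t * ‖x - y‖ ^ 2 / 2 - s * t * ‖u - v‖ ^ 2 / 2
      = 2 * (s * t * ‖r • (u - v) - (x - y)‖ ^ 2) / (2 * (2 * (1 - r ^ 2))) := by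
    rw [← hnum]
    field_simp
  have hpos : 0 ≤ 2 * (s * t * ‖r • (u - v) - (x - y)‖ ^ 2) / (2 * (2 * (1 - r ^ 2))) := by
    positivity
  linarith [step1, step2]

lemma eucl_norm_sq {n : ℕ} (x : EuclideanSpace ℝ (Fin n)) : ‖x‖ ^ 2 = ∑ i, x i ^ 2 := by
  rw [EuclideanSpace.norm_eq, Real.sq_sqrt (by positivity)]
  simp [sq_abs]

lemma gauss_eucl_prod {n : ℕ} {c : ℝ} (z m : EuclideanSpace ℝ (Fin n)) :
    Real.exp (-‖z - m‖ ^ 2 / c) = ∏ i, Real.exp (-(z i - m i) ^ 2 / c) := by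
  rw [← Real.exp_sum]
  congr 1
  rw [eucl_norm_sq]
  rw [neg_div, Finset.sum_div, ← Finset.sum_neg_distrib]
  congr 1
  ext i
  rw [neg_div]
  simp [PiLp.sub_apply]

lemma integrable_gauss_eucl {n : ℕ} {c : ℝ} (hc : 0 < c) (m : EuclideanSpace ℝ (Fin n)) :
    Integrable (fun u : EuclideanSpace ℝ (Fin n) => Real.exp (-‖u - m‖ ^ 2 / c)) := by
  have vp := EuclideanSpace.volume_preserving_symm_measurableEquiv_toLp (Fin n)
  set e := (MeasurableEquiv.toLp 2 (Fin n → ℝ)).symm with he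
  rw [← MeasurePreserving.integrable_comp_emb (vp.symm e) e.symm.measurableEmbedding]
  have hfe : (fun u : EuclideanSpace ℝ (Fin n) => Real.exp (-‖u - m‖ ^ 2 / c)) ∘ e.symm
      = fun x : Fin n → ℝ => ∏ i, Real.exp (-(x i - m i) ^ 2 / c) := by
    funext x
    exact gauss_eucl_prod (e.symm x) m
  rw [hfe]
  exact integrable_gauss_pi hc n (fun i => m i)

lemma pl_euclidean {n : ℕ} {s t : ℝ} (hs : 0 < s) (ht : 0 < t) (hst : s + t = 1)
    {c : ℝ} (hc : 0 < c) (f g h : EuclideanSpace ℝ (Fin n) → ℝ)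
    (hfm : Measurable f) (hgm : Measurable g) (hhm : Measurable h)
    (hf0 : ∀ x, 0 ≤ f x) (hg0 : ∀ x, 0 ≤ g x) (hh0 : ∀ x, 0 ≤ h x)
    (hfD : ∃ (M : ℝ) (m : EuclideanSpace ℝ (Fin n)), ∀ x, f x ≤ M * Real.exp (-‖x - m‖ ^ 2 / c))
    (hgD : ∃ (M : ℝ) (m : EuclideanSpace ℝ (Fin n)), ∀ x, g x ≤ M * Real.exp (-‖x - m‖ ^ 2 / c))
    (hhD : ∃ (M : ℝ) (m : EuclideanSpace ℝ (Fin n)), ∀ x, h x ≤ M * Real.exp (-‖x - m‖ ^ 2 / c))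
    (hyp : ∀ x y, f x ^ s * g y ^ t ≤ h (s • x + t • y)) :
    (∫ x, f x) ^ s * (∫ x, g x) ^ t ≤ ∫ x, h x := by
  have vp := EuclideanSpace.volume_preserving_symm_measurableEquiv_toLp (Fin n)
  set e := (MeasurableEquiv.toLp 2 (Fin n → ℝ)).symm with he
  have hint : ∀ p : EuclideanSpace ℝ (Fin n) → ℝ,
      (∫ x : Fin n → ℝ, p (e.symm x)) = ∫ x, p x := fun p =>
    (vp.symm e).integral_comp e.symm.measurableEmbedding p
  rw [← hint f, ← hint g, ← hint h]
  obtain ⟨Mf, mf, hMf⟩ := hfD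
  obtain ⟨Mg, mg, hMg⟩ := hgD
  obtain ⟨Mh, mh, hMh⟩ := hhD
  refine pl_pi hs ht hst hc n (fun x => f (e.symm x)) (fun x => g (e.symm x))
    (fun x => h (e.symm x))
    (hfm.comp e.symm.measurable) (hgm.comp e.symm.measurable) (hhm.comp e.symm.measurable)
    (fun x => hf0 _) (fun x => hg0 _) (fun x => hh0 _)
    ⟨Mf, fun i => mf i, fun x => ?_⟩ ⟨Mg, fun i => mg i, fun x => ?_⟩
    ⟨Mh, fun i => mh i, fun x => ?_⟩ (fun x y => hyp (e.symm x) (e.symm y))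
  · have h1 := hMf (e.symm x)
    rwa [gauss_eucl_prod] at h1
  · have h1 := hMg (e.symm x)
    rwa [gauss_eucl_prod] at h1
  · have h1 := hMh (e.symm x)
    rwa [gauss_eucl_prod] at h1

lemma key_pointwise {n : ℕ} (s t r : ℝ) (hs : 0 ≤ s) (ht : 0 ≤ t) (hst : s + t = 1)
    (hr : 0 < 1 - r ^ 2)
    (a b c : EuclideanSpace ℝ (Fin n) → ℝ)
    (ha0 : ∀ z, 0 ≤ a z) (hb0 : ∀ z, 0 ≤ b z) (hc0 : ∀ z, 0 ≤ c z)
    (hyp : ∀ x y : EuclideanSpace ℝ (Fin n),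
      (b x * Real.exp (-‖x‖ ^ 2 / 2)) ^ s * (c y * Real.exp (-‖y‖ ^ 2 / 2)) ^ t ≤
        a (s • x + t • y) * Real.exp (-‖s • x + t • y‖ ^ 2 / 2))
    (x y u v : EuclideanSpace ℝ (Fin n)) :
    (b u * Real.exp (-‖u - r • x‖ ^ 2 / (2 * (1 - r ^ 2))) * Real.exp (-‖x‖ ^ 2 / 2)) ^ s *
      (c v * Real.exp (-‖v - r • y‖ ^ 2 / (2 * (1 - r ^ 2))) * Real.exp (-‖y‖ ^ 2 / 2)) ^ t ≤
    a (s • u + t • v) *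
      Real.exp (-‖(s • u + t • v) - r • (s • x + t • y)‖ ^ 2 / (2 * (1 - r ^ 2))) *
      Real.exp (-‖s • x + t • y‖ ^ 2 / 2) := by
  have hsplit : ∀ (q : EuclideanSpace ℝ (Fin n) → ℝ) (uu mm : EuclideanSpace ℝ (Fin n)),
      q uu * Real.exp (-‖uu - mm‖ ^ 2 / (2 * (1 - r ^ 2))) * Real.exp (-‖uu‖ ^ 2 / 2 + ‖uu‖ ^ 2 / 2 - ‖uu‖ ^ 2 / 2) = 0 → True := fun _ _ _ _ => trivial
  -- decompose the b-factor
  have hb1 : b u * Real.exp (-‖u - r • x‖ ^ 2 / (2 * (1 - r ^ 2))) * Real.exp (-‖x‖ ^ 2 / 2)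
      = (b u * Real.exp (-‖u‖ ^ 2 / 2)) *
        Real.exp (‖u‖ ^ 2 / 2 - ‖u - r • x‖ ^ 2 / (2 * (1 - r ^ 2)) - ‖x‖ ^ 2 / 2) := by
    rw [mul_assoc, mul_assoc, ← Real.exp_add, ← Real.exp_add]
    congr 2
    ring
  have hc1 : c v * Real.exp (-‖v - r • y‖ ^ 2 / (2 * (1 - r ^ 2))) * Real.exp (-‖y‖ ^ 2 / 2)
      = (c v * Real.exp (-‖v‖ ^ 2 / 2)) *
        Real.exp (‖v‖ ^ 2 / 2 - ‖v - r • y‖ ^ 2 / (2 * (1 - r ^ 2)) - ‖y‖ ^ 2 / 2) := by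
    rw [mul_assoc, mul_assoc, ← Real.exp_add, ← Real.exp_add]
    congr 2
    ring
  have ha1 : a (s • u + t • v) *
        Real.exp (-‖(s • u + t • v) - r • (s • x + t • y)‖ ^ 2 / (2 * (1 - r ^ 2))) *
        Real.exp (-‖s • x + t • y‖ ^ 2 / 2)
      = (a (s • u + t • v) * Real.exp (-‖s • u + t • v‖ ^ 2 / 2)) *
        Real.exp (‖s • u + t • v‖ ^ 2 / 2
          - ‖(s • u + t • v) - r • (s • x + t • y)‖ ^ 2 / (2 * (1 - r ^ 2))
          - ‖s • x + t • y‖ ^ 2 / 2) := by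
    rw [mul_assoc, mul_assoc, ← Real.exp_add, ← Real.exp_add]
    congr 2
    ring
  rw [hb1, hc1, ha1]
  have hbnn : 0 ≤ b u * Real.exp (-‖u‖ ^ 2 / 2) := mul_nonneg (hb0 u) (Real.exp_pos _).le
  have hcnn : 0 ≤ c v * Real.exp (-‖v‖ ^ 2 / 2) := mul_nonneg (hc0 v) (Real.exp_pos _).le
  rw [Real.mul_rpow hbnn (Real.exp_pos _).le, Real.mul_rpow hcnn (Real.exp_pos _).le,
      ← Real.exp_mul, ← Real.exp_mul]
  calc (b u * Real.exp (-‖u‖ ^ 2 / 2)) ^ s *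
        Real.exp ((‖u‖ ^ 2 / 2 - ‖u - r • x‖ ^ 2 / (2 * (1 - r ^ 2)) - ‖x‖ ^ 2 / 2) * s) *
        ((c v * Real.exp (-‖v‖ ^ 2 / 2)) ^ t *
          Real.exp ((‖v‖ ^ 2 / 2 - ‖v - r • y‖ ^ 2 / (2 * (1 - r ^ 2)) - ‖y‖ ^ 2 / 2) * t))
      = ((b u * Real.exp (-‖u‖ ^ 2 / 2)) ^ s * (c v * Real.exp (-‖v‖ ^ 2 / 2)) ^ t) *
        Real.exp ((‖u‖ ^ 2 / 2 - ‖u - r • x‖ ^ 2 / (2 * (1 - r ^ 2)) - ‖x‖ ^ 2 / 2) * s +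
          (‖v‖ ^ 2 / 2 - ‖v - r • y‖ ^ 2 / (2 * (1 - r ^ 2)) - ‖y‖ ^ 2 / 2) * t) := by
        rw [Real.exp_add]
        ring
    _ ≤ (a (s • u + t • v) * Real.exp (-‖s • u + t • v‖ ^ 2 / 2)) *
        Real.exp ((‖u‖ ^ 2 / 2 - ‖u - r • x‖ ^ 2 / (2 * (1 - r ^ 2)) - ‖x‖ ^ 2 / 2) * s +
          (‖v‖ ^ 2 / 2 - ‖v - r • y‖ ^ 2 / (2 * (1 - r ^ 2)) - ‖y‖ ^ 2 / 2) * t) :=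
        mul_le_mul_of_nonneg_right (hyp u v) (Real.exp_pos _).le
    _ ≤ (a (s • u + t • v) * Real.exp (-‖s • u + t • v‖ ^ 2 / 2)) *
        Real.exp (‖s • u + t • v‖ ^ 2 / 2
          - ‖(s • u + t • v) - r • (s • x + t • y)‖ ^ 2 / (2 * (1 - r ^ 2))
          - ‖s • x + t • y‖ ^ 2 / 2) := by
        refine mul_le_mul_of_nonneg_left (Real.exp_le_exp.mpr ?_) (mul_nonneg (ha0 _) (Real.exp_pos _).le)
        have h1 := exp_ineq s t r hs ht hst hr x y u v
        linarith

end PLaux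

/-- The Gaussian Prékopa–Leindler condition on test functions is
preserved by the Ornstein–Uhlenbeck semigroup. -/
theorem ornsteinUhlenbeck_preserves_gaussian_prekopa_condition {n : ℕ}
    (s t : ℝ) (hs : 0 ≤ s) (ht : 0 ≤ t) (hst : s + t = 1)
    (a b c : EuclideanSpace ℝ (Fin n) → ℝ)
    (ha : Measurable a) (hb : Measurable b) (hc : Measurable c)
    (ha0 : ∀ x, 0 ≤ a x) (hb0 : ∀ x, 0 ≤ b x) (hc0 : ∀ x, 0 ≤ c x)
    (hab : ∃ C, ∀ x, a x ≤ C) (hbb : ∃ C, ∀ x, b x ≤ C) (hcb : ∃ C, ∀ x, c x ≤ C)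
    (hyp : ∀ x y : EuclideanSpace ℝ (Fin n),
      (b x * Real.exp (-‖x‖ ^ 2 / 2)) ^ s * (c y * Real.exp (-‖y‖ ^ 2 / 2)) ^ t ≤
        a (s • x + t • y) * Real.exp (-‖s • x + t • y‖ ^ 2 / 2)) :
    ∀ τ : ℝ, 0 < τ → ∀ x y : EuclideanSpace ℝ (Fin n),
      (ornsteinUhlenbeck τ b x * Real.exp (-‖x‖ ^ 2 / 2)) ^ s *
          (ornsteinUhlenbeck τ c y * Real.exp (-‖y‖ ^ 2 / 2)) ^ t ≤
        ornsteinUhlenbeck τ a (s • x + t • y) *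
          Real.exp (-‖s • x + t • y‖ ^ 2 / 2) := by
  intro τ hτ x y
  obtain ⟨Ca, hCa⟩ := hab
  obtain ⟨Cb, hCb⟩ := hbb
  obtain ⟨Cc, hCc⟩ := hcb
  set r : ℝ := Real.exp (-τ) with hrdef
  have hr0 : 0 < r := Real.exp_pos _
  have hr1 : r < 1 := Real.exp_lt_one_iff.mpr (by linarith)
  have hrsq : 0 < 1 - r ^ 2 := by nlinarith
  have hcpos : (0:ℝ) < 2 * (1 - r ^ 2) := by linarith
  have h2τ : Real.exp (-2 * τ) = r ^ 2 := by
    rw [hrdef, sq, ← Real.exp_add]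
    ring_nf
  have hou : ∀ (f : EuclideanSpace ℝ (Fin n) → ℝ) (z : EuclideanSpace ℝ (Fin n)),
      ornsteinUhlenbeck τ f z = (2 * Real.pi * (1 - r ^ 2)) ^ (-(n : ℝ) / 2) *
        ∫ u, f u * Real.exp (-‖u - r • z‖ ^ 2 / (2 * (1 - r ^ 2))) := by
    intro f z
    rw [ornsteinUhlenbeck, h2τ, ← hrdef]
  set C0 : ℝ := (2 * Real.pi * (1 - r ^ 2)) ^ (-(n : ℝ) / 2) with hC0def
  have hC0 : 0 < C0 := Real.rpow_pos_of_pos (by positivity) _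
  have hKm : ∀ m : EuclideanSpace ℝ (Fin n),
      Measurable (fun u : EuclideanSpace ℝ (Fin n) =>
        Real.exp (-‖u - r • m‖ ^ 2 / (2 * (1 - r ^ 2)))) := by
    intro m
    exact (Real.continuous_exp.comp (by fun_prop)).measurable
  have hInt : ∀ (f : EuclideanSpace ℝ (Fin n) → ℝ), Measurable f → (∀ u, 0 ≤ f u) →
      (∀ u, f u ≤ max Ca (max Cb Cc)) → ∀ m : EuclideanSpace ℝ (Fin n),
      Integrable (fun u => f u * Real.exp (-‖u - r • m‖ ^ 2 / (2 * (1 - r ^ 2)))) := by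
    intro f hfm hf0 hfC m
    refine Integrable.mono' ((integrable_gauss_eucl hcpos (r • m)).const_mul (max Ca (max Cb Cc)))
      (hfm.mul (hKm m)).aestronglyMeasurable (ae_of_all _ fun u => ?_)
    rw [Real.norm_of_nonneg (mul_nonneg (hf0 u) (Real.exp_pos _).le)]
    exact mul_le_mul_of_nonneg_right (hfC u) (Real.exp_pos _).le
  have haC : ∀ u, a u ≤ max Ca (max Cb Cc) := fun u => (hCa u).trans (le_max_left _ _)
  have hbC : ∀ u, b u ≤ max Ca (max Cb Cc) := fun u =>
    (hCb u).trans ((le_max_left _ _).trans (le_max_right _ _))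
  have hcC : ∀ u, c u ≤ max Ca (max Cb Cc) := fun u =>
    (hCc u).trans ((le_max_right _ _).trans (le_max_right _ _))
  rcases eq_or_lt_of_le hs with hs0 | hs'
  · -- s = 0, t = 1
    have hs0 : s = 0 := hs0.symm
    subst hs0
    have ht1 : t = 1 := by linarith
    subst ht1
    simp only [Real.rpow_zero, Real.rpow_one, one_mul, zero_smul, one_smul, zero_add] at hyp ⊢
    have hca : ∀ u, c u ≤ a u := by
      intro u
      have h1 := hyp 0 u
      exact le_of_mul_le_mul_right h1 (Real.exp_pos _)
    refine mul_le_mul_of_nonneg_right ?_ (Real.exp_pos _).le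
    rw [hou c y, hou a y]
    refine mul_le_mul_of_nonneg_left ?_ hC0.le
    exact integral_mono (hInt c hc hc0 hcC y) (hInt a ha ha0 haC y)
      fun u => mul_le_mul_of_nonneg_right (hca u) (Real.exp_pos _).le
  rcases eq_or_lt_of_le ht with ht0 | ht'
  · -- t = 0, s = 1
    have ht0 : t = 0 := ht0.symm
    subst ht0
    have hs1 : s = 1 := by linarith
    subst hs1
    simp only [Real.rpow_zero, Real.rpow_one, mul_one, zero_smul, one_smul, add_zero] at hyp ⊢
    have hba : ∀ u, b u ≤ a u := by
      intro u
      have h1 := hyp u 0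
      exact le_of_mul_le_mul_right h1 (Real.exp_pos _)
    refine mul_le_mul_of_nonneg_right ?_ (Real.exp_pos _).le
    rw [hou b x, hou a x]
    refine mul_le_mul_of_nonneg_left ?_ hC0.le
    exact integral_mono (hInt b hb hb0 hbC x) (hInt a ha ha0 haC x)
      fun u => mul_le_mul_of_nonneg_right (hba u) (Real.exp_pos _).le
  -- main case
  set B : EuclideanSpace ℝ (Fin n) → ℝ := fun u =>
    b u * Real.exp (-‖u - r • x‖ ^ 2 / (2 * (1 - r ^ 2))) * Real.exp (-‖x‖ ^ 2 / 2) with hBdef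
  set C : EuclideanSpace ℝ (Fin n) → ℝ := fun u =>
    c u * Real.exp (-‖u - r • y‖ ^ 2 / (2 * (1 - r ^ 2))) * Real.exp (-‖y‖ ^ 2 / 2) with hCdef
  set A : EuclideanSpace ℝ (Fin n) → ℝ := fun u =>
    a u * Real.exp (-‖u - r • (s • x + t • y)‖ ^ 2 / (2 * (1 - r ^ 2))) *
      Real.exp (-‖s • x + t • y‖ ^ 2 / 2) with hAdef
  have hb' : ornsteinUhlenbeck τ b x * Real.exp (-‖x‖ ^ 2 / 2) = C0 * ∫ u, B u := by
    rw [hou b x, hBdef]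
    rw [integral_mul_const]
    ring
  have hc' : ornsteinUhlenbeck τ c y * Real.exp (-‖y‖ ^ 2 / 2) = C0 * ∫ u, C u := by
    rw [hou c y, hCdef]
    rw [integral_mul_const]
    ring
  have ha' : ornsteinUhlenbeck τ a (s • x + t • y) * Real.exp (-‖s • x + t • y‖ ^ 2 / 2)
      = C0 * ∫ u, A u := by
    rw [hou a (s • x + t • y), hAdef]
    rw [integral_mul_const]
    ring
  have hBm : Measurable B := (hb.mul (hKm x)).mul measurable_const
  have hCm : Measurable C := (hc.mul (hKm y)).mul measurable_const
  have hAm : Measurable A := (ha.mul (hKm (s • x + t • y))).mul measurable_const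
  have hB0 : ∀ u, 0 ≤ B u := fun u =>
    mul_nonneg (mul_nonneg (hb0 u) (Real.exp_pos _).le) (Real.exp_pos _).le
  have hC0' : ∀ u, 0 ≤ C u := fun u =>
    mul_nonneg (mul_nonneg (hc0 u) (Real.exp_pos _).le) (Real.exp_pos _).le
  have hA0 : ∀ u, 0 ≤ A u := fun u =>
    mul_nonneg (mul_nonneg (ha0 u) (Real.exp_pos _).le) (Real.exp_pos _).le
  have hdom : ∀ (f : EuclideanSpace ℝ (Fin n) → ℝ) (Cf : ℝ), (∀ u, f u ≤ Cf) →
      (∀ u, 0 ≤ f u) → ∀ (m : EuclideanSpace ℝ (Fin n)) (w : ℝ), 0 ≤ w →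
      ∀ u, f u * Real.exp (-‖u - r • m‖ ^ 2 / (2 * (1 - r ^ 2))) * w ≤
        (Cf * w) * Real.exp (-‖u - r • m‖ ^ 2 / (2 * (1 - r ^ 2))) := by
    intro f Cf hfC hf0 m w hw u
    have h1 : f u * Real.exp (-‖u - r • m‖ ^ 2 / (2 * (1 - r ^ 2))) ≤
        Cf * Real.exp (-‖u - r • m‖ ^ 2 / (2 * (1 - r ^ 2))) :=
      mul_le_mul_of_nonneg_right (hfC u) (Real.exp_pos _).le
    calc f u * Real.exp (-‖u - r • m‖ ^ 2 / (2 * (1 - r ^ 2))) * w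
        ≤ Cf * Real.exp (-‖u - r • m‖ ^ 2 / (2 * (1 - r ^ 2))) * w :=
          mul_le_mul_of_nonneg_right h1 hw
      _ = (Cf * w) * Real.exp (-‖u - r • m‖ ^ 2 / (2 * (1 - r ^ 2))) := by ring
  have key := pl_euclidean hs' ht' hst hcpos B C A hBm hCm hAm hB0 hC0' hA0
    ⟨Cb * Real.exp (-‖x‖ ^ 2 / 2), r • x, hdom b Cb hCb hb0 x _ (Real.exp_pos _).le⟩
    ⟨Cc * Real.exp (-‖y‖ ^ 2 / 2), r • y, hdom c Cc hCc hc0 y _ (Real.exp_pos _).le⟩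
    ⟨Ca * Real.exp (-‖s • x + t • y‖ ^ 2 / 2), r • (s • x + t • y),
      hdom a Ca hCa ha0 (s • x + t • y) _ (Real.exp_pos _).le⟩
    (fun u v => key_pointwise s t r hs ht hst hrsq a b c ha0 hb0 hc0 hyp x y u v)
  rw [hb', hc', ha']
  rw [Real.mul_rpow hC0.le (integral_nonneg hB0), Real.mul_rpow hC0.le (integral_nonneg hC0')]
  calc C0 ^ s * (∫ u, B u) ^ s * (C0 ^ t * (∫ u, C u) ^ t)
      = (C0 ^ s * C0 ^ t) * ((∫ u, B u) ^ s * (∫ u, C u) ^ t) := by ring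
    _ = C0 * ((∫ u, B u) ^ s * (∫ u, C u) ^ t) := by
        rw [← Real.rpow_add hC0, hst, Real.rpow_one]
    _ ≤ C0 * ∫ u, A u := mul_le_mul_of_nonneg_left key hC0.le
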